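/- If a, x₁, x₂ ∈ ℂ satisfy |a|² + |x₁|² ≤ 1 and |a|² + |x₂|² ≤ 1, then there exists x₃ ∈ ℂ with |x₃| ≤ 1 such that (a, x₁, x₂, x₃) belongs to the closed hexablock ℍ̄. -/

import Mathlib

open Complex

noncomputable section

/-- The closed tetrablock `𝔼̄ ⊆ ℂ³`. -/
def closedTetrablock : Set (ℂ × ℂ × ℂ) :=
  {x | ‖x.1‖ ≤ 1 ∧
    0 ≤ 1 + ‖x.1‖ ^ 2 - ‖x.2.1‖ ^ 2 - ‖x.2.2‖ ^ 2
      - 2 * ‖x.1 - (starRingEnd ℂ) x.2.1 * x.2.2‖}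

/-- The closed hexablock `ℍ̄ ⊆ ℂ⁴`. -/
def closedHexablock : Set (ℂ × ℂ × ℂ × ℂ) :=
  {w | (w.2.1, w.2.2.1, w.2.2.2) ∈ closedTetrablock ∧
    ∀ z₁ z₂ : ℂ, ‖z₁‖ < 1 → ‖z₂‖ < 1 →
      ‖w.1‖ * Real.sqrt ((1 - ‖z₁‖ ^ 2) * (1 - ‖z₂‖ ^ 2)) ≤
        ‖1 - w.2.1 * z₁ - w.2.2.1 * z₂ + w.2.2.2 * z₁ * z₂‖}

private lemma hex_bracket (u v m : ℝ) (hu : 0 ≤ u) (hv : 0 ≤ v) (hm0 : 0 ≤ m)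
    (hm : m ≤ v * u) (hu1 : u ≤ 1) (hv1 : v ≤ 1) :
    (1 - u ^ 2) * (1 - v ^ 2) ≤ (1 - m) ^ 2 := by
  have huv : v * u ≤ 1 := by nlinarith
  have hm1 : m ≤ 1 := le_trans hm huv
  nlinarith [sq_nonneg (u - v), mul_nonneg (sub_nonneg.2 hm1) (sub_nonneg.2 hm),
    mul_nonneg (sub_nonneg.2 huv) (sub_nonneg.2 hm)]

private lemma hex_key (v u R m c : ℝ) (hv0 : 0 ≤ v) (hv1 : v ≤ 1) (hu0 : 0 ≤ u) (hu1 : u ≤ 1)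
    (hR0 : 0 ≤ R) (hR : R ≤ v ^ 2) (hm0 : 0 ≤ m) (hm : m ≤ v * u) (hc : c ≤ m) :
    (1 - v ^ 2) * (1 - u ^ 2) * v ^ 4 ≤
      v ^ 4 * (1 - 2 * c + m ^ 2) - R * (v ^ 4 - 2 * v ^ 2 * c + m ^ 2) := by
  have hbr := hex_bracket u v m hu0 hv0 hm0 hm hu1 hv1
  have hD : 0 ≤ v ^ 2 - R := sub_nonneg.2 hR
  have t1 : 0 ≤ v ^ 2 * (v ^ 2 - R) * ((1 - m) ^ 2 - (1 - u ^ 2) * (1 - v ^ 2)) :=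
    mul_nonneg (mul_nonneg (sq_nonneg v) hD) (sub_nonneg.2 hbr)
  have t2 : 0 ≤ v ^ 2 * (v ^ 2 - R) * (m - c) :=
    mul_nonneg (mul_nonneg (sq_nonneg v) hD) (sub_nonneg.2 hc)
  have hmvu : m ^ 2 ≤ v ^ 2 * u ^ 2 := by nlinarith
  have t3 : 0 ≤ R * (1 - v ^ 2) * (v ^ 2 * u ^ 2 - m ^ 2) :=
    mul_nonneg (mul_nonneg hR0 (by nlinarith)) (sub_nonneg.2 hmvu)
  nlinarith [t1, t2, t3]

private lemma hex_cs (t T X : ℝ) (ht0 : 0 ≤ t) (ht1 : t ≤ 1) (hT : 0 ≤ T) (hX : 0 ≤ X)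
    (hTX : T ^ 2 ≤ X ^ 2) :
    t * T + Real.sqrt (1 - t ^ 2) * Real.sqrt (X ^ 2 - T ^ 2) ≤ X := by
  set s1 := Real.sqrt (1 - t ^ 2) with hs1def
  set S := Real.sqrt (X ^ 2 - T ^ 2) with hSdef
  have hs1 : s1 ^ 2 = 1 - t ^ 2 := Real.sq_sqrt (by nlinarith)
  have hS : S ^ 2 = X ^ 2 - T ^ 2 := Real.sq_sqrt (by linarith)
  have hs1n : 0 ≤ s1 := Real.sqrt_nonneg _
  have hSn : 0 ≤ S := Real.sqrt_nonneg _
  nlinarith [sq_nonneg (t * S - s1 * T), sq_nonneg (t * T + s1 * S - X),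
    mul_nonneg (mul_nonneg ht0 hT) hX, mul_nonneg (mul_nonneg hs1n hSn) hX,
    mul_nonneg (mul_nonneg ht0 hT) (mul_nonneg hs1n hSn)]

set_option maxHeartbeats 1600000 in
/-- If `|a|² + |x₁|² ≤ 1` and `|a|² + |x₂|² ≤ 1`, then there is `x₃` with `|x₃| ≤ 1`
such that `(a, x₁, x₂, x₃)` belongs to the closed hexablock. -/
theorem point_in_closed_hexablock_of_two_balls
    (a x₁ x₂ : ℂ) (h₁ : ‖a‖ ^ 2 + ‖x₁‖ ^ 2 ≤ 1)
    (h₂ : ‖a‖ ^ 2 + ‖x₂‖ ^ 2 ≤ 1) :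
    ∃ x₃ : ℂ, ‖x₃‖ ≤ 1 ∧ (a, x₁, x₂, x₃) ∈ closedHexablock := by
  set A := ‖a‖ with hAdef
  have hA0 : 0 ≤ A := norm_nonneg a
  set r := ‖x₁‖ with hrdef
  set s := ‖x₂‖ with hsdef
  have hr0 : 0 ≤ r := norm_nonneg x₁
  have hs0 : 0 ≤ s := norm_nonneg x₂
  set B : ℝ := 1 - A ^ 2 with hBdef
  have hr2 : r ^ 2 ≤ B := by simp only [hBdef]; linarith
  have hs2 : s ^ 2 ≤ B := by simp only [hBdef]; linarith
  have hB1 : B ≤ 1 := by simp only [hBdef]; nlinarith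
  clear_value A r s B
  by_cases hB : 0 < B
  case neg =>
    -- |a| = 1, so x₁ = x₂ = 0; take x₃ = 0.
    have hx1 : x₁ = 0 := by
      have : r = 0 := by nlinarith
      rw [hrdef] at this
      exact norm_eq_zero.mp this
    have hx2 : x₂ = 0 := by
      have : s = 0 := by nlinarith
      rw [hsdef] at this
      exact norm_eq_zero.mp this
    refine ⟨0, by simp, ?_, ?_⟩
    · simp [closedTetrablock, hx1, hx2]
    · intro z₁ z₂ hz₁ hz₂
      simp only [hx1, hx2, zero_mul, mul_zero, sub_zero, add_zero, norm_one]
      have ht0 := norm_nonneg z₁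
      have hu0 := norm_nonneg z₂
      have hA1 : A ≤ 1 := by nlinarith
      have hsq : Real.sqrt ((1 - ‖z₁‖ ^ 2) * (1 - ‖z₂‖ ^ 2)) ≤ 1 := by
        apply Real.sqrt_le_one.mpr
        have hu2 : 0 ≤ (1 - ‖z₁‖ ^ 2) * ‖z₂‖ ^ 2 :=
          mul_nonneg (by nlinarith) (sq_nonneg _)
        nlinarith [sq_nonneg (‖z₁‖)]
      rw [← hAdef]
      calc A * Real.sqrt ((1 - ‖z₁‖ ^ 2) * (1 - ‖z₂‖ ^ 2))
          ≤ 1 * 1 := by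
            apply mul_le_mul hA1 hsq (Real.sqrt_nonneg _) zero_le_one
        _ = 1 := one_mul 1
  case pos =>
    have hBne : (B : ℂ) ≠ 0 := Complex.ofReal_ne_zero.mpr hB.ne'
    refine ⟨((B : ℝ) : ℂ)⁻¹ * (x₁ * x₂), ?_, ?_, ?_⟩
    all_goals
      have habs3 : ‖((B : ℝ) : ℂ)⁻¹ * (x₁ * x₂)‖ = r * s / B := by
        rw [norm_mul, norm_mul, norm_inv, Complex.norm_real, Real.norm_eq_abs, abs_of_pos hB]
        rw [← hrdef, ← hsdef]; ring
    -- |x₃| ≤ 1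
    · rw [habs3, div_le_one hB]
      nlinarith [sq_nonneg (r - s)]
    -- tetrablock membership
    · simp only [closedTetrablock, Set.mem_setOf_eq]
      constructor
      · rw [← hrdef]; nlinarith
      · have hconj : x₁ - (starRingEnd ℂ) x₂ * (((B : ℝ) : ℂ)⁻¹ * (x₁ * x₂))
            = (((B - s ^ 2) / B : ℝ) : ℂ) * x₁ := by
          have h2 : (starRingEnd ℂ) x₂ * x₂ = ((s : ℂ)) ^ 2 := by
            rw [mul_comm, Complex.mul_conj, ← Complex.sq_norm, ← hsdef]
            push_cast; ring
          push_cast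
          field_simp
          linear_combination (-x₁) * h2
        rw [← hrdef, ← hsdef, habs3, hconj, norm_mul, Complex.norm_real, Real.norm_eq_abs, ← hrdef,
          _root_.abs_of_nonneg (div_nonneg (by linarith) hB.le : (0:ℝ) ≤ (B - s ^ 2) / B)]
        have key : 1 + r ^ 2 - s ^ 2 - (r * s / B) ^ 2 - 2 * ((B - s ^ 2) / B * r)
            = ((B - s ^ 2) * (B - r) ^ 2 + B * (1 - B) * (B - r ^ 2)) / B ^ 2 := by
          field_simp; ring
        rw [key]
        apply div_nonneg _ (by positivity)
        have h1 : 0 ≤ (B - s ^ 2) * (B - r) ^ 2 :=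
          mul_nonneg (by linarith) (sq_nonneg _)
        have h2 : 0 ≤ B * (1 - B) * (B - r ^ 2) :=
          mul_nonneg (mul_nonneg hB.le (by linarith)) (by linarith)
        linarith
    -- the sup inequality
    · intro z₁ z₂ hz₁ hz₂
      set t := ‖z₁‖ with htdef
      set u := ‖z₂‖ with hudef
      have ht0 : 0 ≤ t := norm_nonneg z₁
      have hu0 : 0 ≤ u := norm_nonneg z₂
      have ht1 : t ≤ 1 := le_of_lt hz₁
      have hu1 : u ≤ 1 := le_of_lt hz₂
      set w : ℂ := x₂ * z₂ with hwdef
      set X := ‖1 - w‖ with hXdef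
      set Y := ‖((B : ℝ) : ℂ) - w‖ with hYdef
      set m := ‖w‖ with hmdef
      set c := w.re with hcdef
      clear_value t u
      have hm0 : 0 ≤ m := norm_nonneg w
      have hX0 : 0 ≤ X := norm_nonneg _
      have hY0 : 0 ≤ Y := norm_nonneg _
      clear_value X Y m c
      set v := Real.sqrt B with hvdef
      have hv0 : 0 ≤ v := Real.sqrt_nonneg _
      have hv2 : v ^ 2 = B := Real.sq_sqrt hB.le
      have hv1 : v ≤ 1 := by rw [hvdef]; exact Real.sqrt_le_one.mpr hB1
      have hsv : s ≤ v := by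
        have h := Real.sqrt_le_sqrt hs2
        rwa [Real.sqrt_sq hs0, ← hvdef] at h
      clear_value v
      have hmvu : m ≤ v * u := by
        have : m = s * u := by rw [hmdef, hwdef, norm_mul, ← hsdef, ← hudef]
        rw [this]
        exact mul_le_mul_of_nonneg_right hsv hu0
      have hc : c ≤ m := by rw [hcdef, hmdef]; exact Complex.re_le_norm w
      have hX2 : X ^ 2 = 1 - 2 * c + m ^ 2 := by
        rw [hXdef, Complex.sq_norm, Complex.normSq_apply]
        have hm2 : m ^ 2 = w.re ^ 2 + w.im ^ 2 := by
          rw [hmdef, Complex.sq_norm, Complex.normSq_apply]; ring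
        rw [hm2]
        simp only [Complex.sub_re, Complex.sub_im, Complex.one_re, Complex.one_im, hcdef]
        ring
      have hY2 : Y ^ 2 = B ^ 2 - 2 * B * c + m ^ 2 := by
        rw [hYdef, Complex.sq_norm, Complex.normSq_apply]
        have hm2 : m ^ 2 = w.re ^ 2 + w.im ^ 2 := by
          rw [hmdef, Complex.sq_norm, Complex.normSq_apply]; ring
        rw [hm2]
        simp only [Complex.sub_re, Complex.sub_im, Complex.ofReal_re, Complex.ofReal_im, hcdef]
        ring
      have hR : r ^ 2 ≤ v ^ 2 := by rw [hv2]; exact hr2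
      have hkey := hex_key v u (r ^ 2) m c hv0 hv1 hu0 hu1 (sq_nonneg r) hR hm0 hmvu hc
      -- hkey : (1 - v²)(1 - u²) v⁴ ≤ v⁴(1-2c+m²) - r²(v⁴ - 2v²c + m²)
      have hA2 : 1 - v ^ 2 = A ^ 2 := by rw [hv2]; simp only [hBdef]; ring
      have hkey2 : A ^ 2 * (1 - u ^ 2) * B ^ 2 ≤ B ^ 2 * X ^ 2 - r ^ 2 * Y ^ 2 := by
        have e1 : B ^ 2 * X ^ 2 = v ^ 4 * (1 - 2 * c + m ^ 2) := by
          rw [hX2, ← hv2]; ring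
        have e2 : r ^ 2 * Y ^ 2 = r ^ 2 * (v ^ 4 - 2 * v ^ 2 * c + m ^ 2) := by
          rw [hY2, ← hv2]; ring
        rw [e1, e2]
        calc A ^ 2 * (1 - u ^ 2) * B ^ 2 = (1 - v ^ 2) * (1 - u ^ 2) * v ^ 4 := by
              rw [← hA2, ← hv2]; ring
          _ ≤ _ := hkey
      set T := r * Y / B with hTdef
      have hT0 : 0 ≤ T := by positivity
      have h1mu : (0:ℝ) ≤ 1 - u ^ 2 := by
        linarith [mul_nonneg (sub_nonneg.2 hu1) (add_nonneg zero_le_one hu0)]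
      have hXT : A ^ 2 * (1 - u ^ 2) ≤ X ^ 2 - T ^ 2 := by
        have hT2 : T ^ 2 = r ^ 2 * Y ^ 2 / B ^ 2 := by rw [hTdef]; ring
        have e : X ^ 2 - r ^ 2 * Y ^ 2 / B ^ 2 - A ^ 2 * (1 - u ^ 2)
            = (B ^ 2 * X ^ 2 - r ^ 2 * Y ^ 2 - A ^ 2 * (1 - u ^ 2) * B ^ 2) / B ^ 2 := by
          field_simp
        have hnum : 0 ≤ (B ^ 2 * X ^ 2 - r ^ 2 * Y ^ 2 - A ^ 2 * (1 - u ^ 2) * B ^ 2) / B ^ 2 :=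
          div_nonneg (by linarith [hkey2]) (by positivity)
        rw [hT2]; linarith [e ▸ hnum]
      have hTX : T ^ 2 ≤ X ^ 2 := by
        have := mul_nonneg (sq_nonneg A) h1mu
        linarith
      -- triangle inequality
      have htri : X ≤ ‖1 - x₁ * z₁ - x₂ * z₂ + ((B : ℝ) : ℂ)⁻¹ * (x₁ * x₂) * z₁ * z₂‖ + t * T := by
        have heq : (1 : ℂ) - w =
            (1 - x₁ * z₁ - x₂ * z₂ + ((B : ℝ) : ℂ)⁻¹ * (x₁ * x₂) * z₁ * z₂)
              + x₁ * z₁ * (((B : ℝ) : ℂ)⁻¹ * (((B : ℝ) : ℂ) - w)) := by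
          rw [hwdef]; field_simp; ring
        have habs : ‖x₁ * z₁ * (((B : ℝ) : ℂ)⁻¹ * (((B : ℝ) : ℂ) - w))‖ = t * T := by
          rw [norm_mul, norm_mul, norm_mul, norm_inv, Complex.norm_real, Real.norm_eq_abs, abs_of_pos hB,
            ← hrdef, ← htdef, ← hYdef, hTdef]
          field_simp
        calc X = ‖(1 - x₁ * z₁ - x₂ * z₂ + ((B : ℝ) : ℂ)⁻¹ * (x₁ * x₂) * z₁ * z₂)
              + x₁ * z₁ * (((B : ℝ) : ℂ)⁻¹ * (((B : ℝ) : ℂ) - w))‖ := by rw [hXdef, heq]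
          _ ≤ _ + ‖x₁ * z₁ * (((B : ℝ) : ℂ)⁻¹ * (((B : ℝ) : ℂ) - w))‖ :=
              norm_add_le _ _
          _ = _ + t * T := by rw [habs]
      have hcs := hex_cs t T X ht0 ht1 hT0 hX0 hTX
      have hsqrtge : A * Real.sqrt (1 - u ^ 2) ≤ Real.sqrt (X ^ 2 - T ^ 2) := by
        have h1 : A * Real.sqrt (1 - u ^ 2) = Real.sqrt (A ^ 2 * (1 - u ^ 2)) := by
          rw [Real.sqrt_mul (sq_nonneg A), Real.sqrt_sq hA0]
        rw [h1]
        exact Real.sqrt_le_sqrt hXT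
      have hmulsplit : Real.sqrt ((1 - t ^ 2) * (1 - u ^ 2))
          = Real.sqrt (1 - t ^ 2) * Real.sqrt (1 - u ^ 2) := by
        exact Real.sqrt_mul (by
          linarith [mul_nonneg (sub_nonneg.2 ht1) (add_nonneg zero_le_one ht0)]) _
      rw [← hAdef]
      calc A * Real.sqrt ((1 - t ^ 2) * (1 - u ^ 2))
          = Real.sqrt (1 - t ^ 2) * (A * Real.sqrt (1 - u ^ 2)) := by
            rw [hmulsplit]; ring
        _ ≤ Real.sqrt (1 - t ^ 2) * Real.sqrt (X ^ 2 - T ^ 2) :=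
            mul_le_mul_of_nonneg_left hsqrtge (Real.sqrt_nonneg _)
        _ ≤ X - t * T := by linarith [hcs]
        _ ≤ ‖1 - x₁ * z₁ - x₂ * z₂ + ((B : ℝ) : ℂ)⁻¹ * (x₁ * x₂) * z₁ * z₂‖ := by
            linarith [htri]
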